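/- Every graph G with n vertices and maximum degree at most 5 has a subset I ⊆ V(G) with |I| ≥ (35/78)·n - 8/13 such that the induced subgraph G[I] has maximum degree at most 3. -/

import Mathlib

open SimpleGraph

/-- `H` is a minor of `G`: disjoint connected branch sets witnessing every edge of `H`. -/
def IsMinorOf {β α : Type} (H : SimpleGraph β) (G : SimpleGraph α) : Prop :=
  ∃ f : β → Set α,
    (∀ b, (f b).Nonempty) ∧
    (∀ b, (G.induce (f b)).Connected) ∧
    (Pairwise fun b₁ b₂ => Disjoint (f b₁) (f b₂)) ∧
    ∀ ⦃b₁ b₂⦄, H.Adj b₁ b₂ → ∃ u ∈ f b₁, ∃ v ∈ f b₂, G.Adj u v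

/-- A graph is planar iff it has neither a `K₅` nor a `K₃,₃` minor (Wagner's theorem). -/
def IsPlanar {α : Type} (G : SimpleGraph α) : Prop :=
  ¬ IsMinorOf (completeGraph (Fin 5)) G ∧
  ¬ IsMinorOf (completeBipartiteGraph (Fin 3) (Fin 3)) G

/-- A graph is outerplanar iff it has neither a `K₄` nor a `K₂,₃` minor. -/
def IsOuterplanar {α : Type} (G : SimpleGraph α) : Prop :=
  ¬ IsMinorOf (completeGraph (Fin 4)) G ∧
  ¬ IsMinorOf (completeBipartiteGraph (Fin 2) (Fin 3)) G

/-- An outerpath is (isomorphic to) a spanning subgraph of the square of a path: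
there is a linear ordering of the vertices in which every edge joins vertices
at distance at most `2`. -/
def IsOuterpath {α : Type} [Fintype α] (G : SimpleGraph α) : Prop :=
  ∃ σ : α ≃ Fin (Fintype.card α),
    ∀ u v, G.Adj u v → (σ u).val ≤ (σ v).val + 2 ∧ (σ v).val ≤ (σ u).val + 2

/-- Arc of the outer cycle `0,1,…,n-1` from `a` to `b` (inclusive): the vertex set of
one of the two `ab`-split subgraphs of a maximal outerplanar graph whose
outerplane embedding has the canonical outer cycle on `ZMod n`. -/
def arc (n : ℕ) [NeZero n] (a b : ZMod n) : Set (ZMod n) := {w | (w - a).val ≤ (b - a).val}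

section Cut
variable {V : Type} [Fintype V] [DecidableEq V] (G : SimpleGraph V) [DecidableRel G.Adj]

/-- twice the cut size of the partition (A, Aᶜ) -/
def cutZ (A : Finset V) : ℤ :=
  ∑ u : V, ∑ w : V, if G.Adj u w ∧ ¬((u ∈ A) ↔ (w ∈ A)) then 1 else 0

lemma cutZ_compl (A : Finset V) : cutZ G Aᶜ = cutZ G A := by
  refine Finset.sum_congr rfl fun u _ => Finset.sum_congr rfl fun w _ => ?_
  by_cases h : G.Adj u w <;> by_cases h1 : u ∈ A <;> by_cases h2 : w ∈ A <;>
    simp [h, h1, h2, Finset.mem_compl]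

lemma cutZ_erase (A : Finset V) (v : V) (hv : v ∈ A) :
    cutZ G (A.erase v) = cutZ G A +
      2 * (((G.neighborFinset v ∩ A).card : ℤ) - ((G.neighborFinset v ∩ Aᶜ).card : ℤ)) := by
  classical
  set A' := A.erase v with hA'
  set D : V → V → ℤ := fun u w =>
    (if G.Adj u w ∧ ¬((u ∈ A') ↔ (w ∈ A')) then (1:ℤ) else 0) -
    (if G.Adj u w ∧ ¬((u ∈ A) ↔ (w ∈ A)) then (1:ℤ) else 0) with hD
  have hDsymm : ∀ u w, D u w = D w u := by
    intro u w
    simp only [hD, G.adj_comm u w]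
    congr 1 <;> exact if_congr (by tauto) rfl rfl
  have hDzero : ∀ u w, u ≠ v → w ≠ v → D u w = 0 := by
    intro u w hu hw
    have h1 : u ∈ A' ↔ u ∈ A := by simp [hA', hu]
    have h2 : w ∈ A' ↔ w ∈ A := by simp [hA', hw]
    simp only [hD, h1, h2, sub_self]
  have hDvv : D v v = 0 := by simp [hD, G.loopless.irrefl v]
  have key : cutZ G A' - cutZ G A = ∑ u : V, ∑ w : V, D u w := by
    simp [cutZ, hD, Finset.sum_sub_distrib]
  have hrow : ∀ u : V, u ≠ v → ∑ w : V, D u w = D u v := by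
    intro u hu
    exact Finset.sum_eq_single_of_mem v (Finset.mem_univ v)
      (fun w _ hw => hDzero u w hu hw)
  have hsplit : ∑ u : V, ∑ w : V, D u w = 2 * ∑ w : V, D v w := by
    rw [← Finset.add_sum_erase _ _ (Finset.mem_univ v)]
    have : ∑ u ∈ Finset.univ.erase v, ∑ w : V, D u w
        = ∑ u ∈ Finset.univ.erase v, D v u := by
      refine Finset.sum_congr rfl fun u hu => ?_
      rw [hrow u (Finset.ne_of_mem_erase hu), hDsymm]
    rw [this, Finset.sum_erase _ hDvv]
    ring
  -- now compute the row sum at v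
  have hrowv : ∑ w : V, D v w =
      ((G.neighborFinset v ∩ A).card : ℤ) - ((G.neighborFinset v ∩ Aᶜ).card : ℤ) := by
    have h1 : ∀ w, (if G.Adj v w ∧ ¬((v ∈ A') ↔ (w ∈ A')) then (1:ℤ) else 0)
        = if w ∈ G.neighborFinset v ∩ A then (1:ℤ) else 0 := by
      intro w
      refine if_congr ?_ rfl rfl
      constructor
      · rintro ⟨hadj, hiff⟩
        refine Finset.mem_inter.2 ⟨by simpa using hadj, ?_⟩
        have hvA' : v ∉ A' := Finset.notMem_erase v A
        have hw : w ≠ v := (G.ne_of_adj hadj).symm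
        by_contra hwA
        exact hiff ⟨fun h => absurd h hvA', fun h => absurd (Finset.mem_of_mem_erase h) hwA⟩
      · intro hw
        obtain ⟨hadj, hwA⟩ := Finset.mem_inter.1 hw
        have hadj' : G.Adj v w := by simpa using hadj
        have hvA' : v ∉ A' := Finset.notMem_erase v A
        have hwv : w ≠ v := (G.ne_of_adj hadj').symm
        have hwA' : w ∈ A' := Finset.mem_erase.2 ⟨hwv, hwA⟩
        exact ⟨hadj', fun hiff => hvA' (hiff.2 hwA')⟩
    have h2 : ∀ w, (if G.Adj v w ∧ ¬((v ∈ A) ↔ (w ∈ A)) then (1:ℤ) else 0)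
        = if w ∈ G.neighborFinset v ∩ Aᶜ then (1:ℤ) else 0 := by
      intro w
      refine if_congr ?_ rfl rfl
      simp only [Finset.mem_inter, SimpleGraph.mem_neighborFinset, Finset.mem_compl]
      constructor
      · rintro ⟨hadj, hiff⟩; exact ⟨hadj, fun hwA => hiff ⟨fun _ => hwA, fun _ => hv⟩⟩
      · rintro ⟨hadj, hwA⟩; exact ⟨hadj, fun hiff => hwA (hiff.1 hv)⟩
    calc ∑ w : V, D v w
        = ∑ w : V, ((if w ∈ G.neighborFinset v ∩ A then (1:ℤ) else 0)
            - (if w ∈ G.neighborFinset v ∩ Aᶜ then (1:ℤ) else 0)) := by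
          refine Finset.sum_congr rfl fun w _ => ?_
          simp only [hD]; rw [h1 w, h2 w]
      _ = ((G.neighborFinset v ∩ A).card : ℤ) - ((G.neighborFinset v ∩ Aᶜ).card : ℤ) := by
          have c1 : ∑ w : V, (if w ∈ G.neighborFinset v ∩ A then (1:ℤ) else 0)
              = ((G.neighborFinset v ∩ A).card : ℤ) := by
            rw [Finset.sum_ite_mem]; simp
          have c2 : ∑ w : V, (if w ∈ G.neighborFinset v ∩ Aᶜ then (1:ℤ) else 0)
              = ((G.neighborFinset v ∩ Aᶜ).card : ℤ) := by
            rw [Finset.sum_ite_mem]; simp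
          rw [Finset.sum_sub_distrib, c1, c2]
  have : cutZ G A' - cutZ G A
      = 2 * (((G.neighborFinset v ∩ A).card : ℤ) - ((G.neighborFinset v ∩ Aᶜ).card : ℤ)) := by
    rw [key, hsplit, hrowv]
  linarith

end Cut

/-- Every graph with `n` vertices and maximum degree at most `5` has a vertex subset
`I` with `|I| ≥ (35/78)·n - 8/13` inducing a subgraph of maximum degree at most `3`
(given the dominating-set bound for `4`-regular graphs). -/
theorem stmt14 {V : Type} [Fintype V] (G : SimpleGraph V)
    (hdeg : ∀ v, (G.neighborSet v).ncard ≤ 5)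
    (hdom4 : ∀ (h : ℕ) (H : SimpleGraph (Fin h)),
      (∀ v, (H.neighborSet v).ncard = 4) →
      ∃ D : Set (Fin h), (∀ v, v ∈ D ∨ ∃ u ∈ D, H.Adj u v) ∧
        (D.ncard : ℝ) ≤ 4 * h / 11) :
    ∃ I : Set V,
      ((35 : ℝ) / 78) * (Fintype.card V : ℝ) - 8 / 13 ≤ (I.ncard : ℝ) ∧
      ∀ v ∈ I, ((G.neighborSet v) ∩ I).ncard ≤ 3 := by
  classical
  have hdeg' : ∀ v, (G.neighborFinset v).card ≤ 5 := by
    intro v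
    have := hdeg v
    rwa [Set.ncard_eq_toFinset_card', ← SimpleGraph.neighborFinset_def] at this
  obtain ⟨A, -, hmax⟩ := Finset.exists_max_image (Finset.univ : Finset (Finset V)) (cutZ G)
    ⟨∅, Finset.mem_univ _⟩
  -- both sides induce max degree ≤ 2
  have hside : ∀ (B : Finset V), cutZ G B = cutZ G A → ∀ v ∈ B,
      (G.neighborFinset v ∩ B).card ≤ 2 := by
    intro B hB v hv
    have h := hmax (B.erase v) (Finset.mem_univ _)
    rw [cutZ_erase G B v hv, hB] at h
    have hxy : ((G.neighborFinset v ∩ B).card : ℤ) ≤ ((G.neighborFinset v ∩ Bᶜ).card : ℤ) := by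
      linarith
    have hxy' : (G.neighborFinset v ∩ B).card ≤ (G.neighborFinset v ∩ Bᶜ).card := by
      exact_mod_cast hxy
    have hsum : (G.neighborFinset v ∩ B).card + (G.neighborFinset v ∩ Bᶜ).card
        = (G.neighborFinset v).card := by
      rw [← Finset.sdiff_eq_inter_compl, Finset.card_inter_add_card_sdiff]
    have := hdeg' v
    omega
  have hA : ∀ v ∈ A, (G.neighborFinset v ∩ A).card ≤ 2 := hside A rfl
  have hAc : ∀ v ∈ Aᶜ, (G.neighborFinset v ∩ Aᶜ).card ≤ 2 := hside Aᶜ (cutZ_compl G A)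
  have hcards : A.card + Aᶜ.card = Fintype.card V := Finset.card_add_card_compl A
  -- choose the larger side
  have main : ∀ (B : Finset V), (∀ v ∈ B, (G.neighborFinset v ∩ B).card ≤ 2) →
      Fintype.card V ≤ 2 * B.card →
      ∃ I : Set V,
        ((35 : ℝ) / 78) * (Fintype.card V : ℝ) - 8 / 13 ≤ (I.ncard : ℝ) ∧
        ∀ v ∈ I, ((G.neighborSet v) ∩ I).ncard ≤ 3 := by
    intro B hB hcard
    refine ⟨↑B, ?_, ?_⟩
    · rw [Set.ncard_coe_finset]
      have h1 : (Fintype.card V : ℝ) ≤ 2 * (B.card : ℝ) := by exact_mod_cast hcard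
      have h2 : (0 : ℝ) ≤ (Fintype.card V : ℝ) := Nat.cast_nonneg _
      linarith
    · intro v hv
      have : (G.neighborSet v) ∩ (↑B : Set V) = ↑(G.neighborFinset v ∩ B) := by
        rw [Finset.coe_inter]; congr 1; rw [SimpleGraph.neighborFinset_def, Set.coe_toFinset]
      rw [this, Set.ncard_coe_finset]
      exact le_trans (hB v hv) (by norm_num)
  by_cases hc : Aᶜ.card ≤ A.card
  · exact main A hA (by omega)
  · exact main Aᶜ hAc (by omega)
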